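/- In any multipartite tournament, if a vertex c has in-degree at least 1, then either some 3-Duke has an arc to c, or some vertex in c's partite set is a 2-Duke. -/
import Mathlib


/-- An orientation of a complete multipartite graph: vertices `V`, partite sets
given as fibers of `part : V → ι`, and `peck` the arc relation. Between any two
vertices in different partite sets there is exactly one arc, and there are no
arcs within a partite set. -/
structure MTour (V : Type*) (ι : Type*) where
  part : V → ι
  peck : V → V → Prop
  complete : ∀ u v, part u ≠ part v → peck u v ∨ peck v u
  inter : ∀ u v, peck u v → part u ≠ part v
  asymm : ∀ u v, peck u v → ¬ peck v u

namespace MTour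

variable {V ι : Type*}

/-- There is a directed path of length at most `m` from `d` to `c`. -/
def hasPath (T : MTour V ι) (m : ℕ) (d c : V) : Prop :=
  ∃ k ≤ m, ∃ f : ℕ → V, f 0 = d ∧ f k = c ∧ ∀ i < k, T.peck (f i) (f (i + 1))

/-- `d` is an `m`-Duke: every vertex in a different partite set is reachable
from `d` by a directed path of length at most `m`. -/
def isDuke (T : MTour V ι) (m : ℕ) (d : V) : Prop :=
  ∀ c, T.part c ≠ T.part d → T.hasPath m d c

/-- `d` is an `m`-King: every other vertex is reachable from `d` by a directed
path of length at most `m`. -/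
def isKing (T : MTour V ι) (m : ℕ) (d : V) : Prop :=
  ∀ c, c ≠ d → T.hasPath m d c

/-- The out-degree of a vertex. -/
noncomputable def outDeg (T : MTour V ι) (v : V) : ℕ :=
  Nat.card {w // T.peck v w}

/-- `e` eclipses `d`: same partite set, `e` pecks everything `d` pecks, and
at least one vertex `d` does not peck. -/
def eclipses (T : MTour V ι) (e d : V) : Prop :=
  T.part e = T.part d ∧ (∀ c, T.peck d c → T.peck e c) ∧ ∃ c, T.peck e c ∧ ¬ T.peck d c

/-- `d` is non-eclipsed: no vertex of its partite set eclipses it. -/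
def nonEclipsed (T : MTour V ι) (d : V) : Prop :=
  ∀ e, ¬ T.eclipses e d

/-- Partite set `i` dominates partite set `j`: some vertex of `i` pecks all of `j`. -/
def Dominates (T : MTour V ι) (i j : ι) : Prop :=
  ∃ v, T.part v = i ∧ ∀ w, T.part w = j → T.peck v w

end MTour


namespace MTourAux

variable {V ι : Type*}

lemma path1 (T : MTour V ι) {m : ℕ} (hm : 1 ≤ m) {d x : V} (h : T.peck d x) :
    T.hasPath m d x := by
  refine ⟨1, hm, fun i => if i = 0 then d else x, by simp, by simp, ?_⟩
  intro i hi
  have : i = 0 := by omega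
  simp [this, h]

lemma path2 (T : MTour V ι) {m : ℕ} (hm : 2 ≤ m) {d w x : V}
    (h1 : T.peck d w) (h2 : T.peck w x) : T.hasPath m d x := by
  refine ⟨2, hm, fun i => if i = 0 then d else if i = 1 then w else x, by simp, by simp, ?_⟩
  intro i hi
  interval_cases i <;> simp [h1, h2]

lemma path3 (T : MTour V ι) {m : ℕ} (hm : 3 ≤ m) {d w u x : V}
    (h1 : T.peck d w) (h2 : T.peck w u) (h3 : T.peck u x) : T.hasPath m d x := by
  refine ⟨3, hm, fun i => if i = 0 then d else if i = 1 then w else if i = 2 then u else x,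
    by simp, by simp, ?_⟩
  intro i hi
  interval_cases i <;> simp [h1, h2, h3]

/-- The key potential function: size of out-neighbourhood together with own part. -/
noncomputable def mu (T : MTour V ι) (u : V) : ℕ :=
  ({w | T.peck u w} ∪ {w | T.part w = T.part u} : Set V).ncard

/-- Core counting argument: if `z` pecks `c`, pecks (or coparts) everything `d`
pecks and everything in `d`'s part, and additionally pecks (or coparts) a
witness outside `d`'s closed neighbourhood, then `d` was not `mu`-maximal
among peckers of `c`. -/
lemma core (T : MTour V ι) [Finite V] {c d : V}
    (hmax : ∀ z, T.peck z c → mu T z ≤ mu T d) {z wit : V} (hz : T.peck z c)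
    (h1 : ∀ w, T.peck d w → T.peck z w ∨ T.part w = T.part z)
    (h2 : ∀ p, T.part p = T.part d → T.peck z p ∨ T.part p = T.part z)
    (h3 : T.peck z wit ∨ T.part wit = T.part z)
    (h4 : ¬ T.peck d wit) (h5 : T.part wit ≠ T.part d) : False := by
  set A : Set V := {w | T.peck d w} ∪ {w | T.part w = T.part d} with hA
  set B : Set V := {w | T.peck z w} ∪ {w | T.part w = T.part z} with hB
  have hAB : A ⊆ B := by
    rintro y (hy | hy)
    · rcases h1 y hy with h | h
      · exact Or.inl h
      · exact Or.inr h
    · rcases h2 y hy with h | h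
      · exact Or.inl h
      · exact Or.inr h
  have hwB : wit ∈ B := by
    rcases h3 with h | h
    · exact Or.inl h
    · exact Or.inr h
  have hwA : wit ∉ A := by
    rintro (h | h)
    · exact h4 h
    · exact h5 h
  have hss : A ⊂ B := ⟨hAB, fun hBA => hwA (hBA hwB)⟩
  have hlt := Set.ncard_lt_ncard hss (Set.toFinite B)
  have hle := hmax z hz
  simp only [mu, ← hA, ← hB] at hle
  omega

/-- If `p` is in `d`'s part and pecks everything `d` pecks, then `p` cannot
peck a witness outside `d`'s closed neighbourhood (by `mu`-maximality of `d`). -/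
lemma kblock (T : MTour V ι) [Finite V] {c d : V} (hdc : T.peck d c)
    (hmax : ∀ z, T.peck z c → mu T z ≤ mu T d) {p wit : V}
    (hp : T.part p = T.part d)
    (hpN : ∀ w, T.peck d w → T.peck p w)
    (h4 : ¬ T.peck d wit) (h5 : T.part wit ≠ T.part d)
    (hpw : T.peck p wit) : False :=
  core T hmax (hpN c hdc) (fun w hw => Or.inl (hpN w hw))
    (fun q hq => Or.inr (hq.trans hp.symm)) (Or.inl hpw) h4 h5

end MTourAux

/-- In any multipartite tournament, any vertex that is pecked is either pecked
by a 3-Duke or shares a partite set with a 2-Duke. -/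
theorem stmt5 {V ι : Type*} [Finite V] (T : MTour V ι) (c : V)
    (hpecked : ∃ a, T.peck a c) :
    (∃ d, T.isDuke 3 d ∧ T.peck d c) ∨
    (∃ d, T.part d = T.part c ∧ T.isDuke 2 d) := by
  classical
  open MTourAux in
  have hne : Nonempty {a // T.peck a c} := hpecked.elim fun a ha => ⟨⟨a, ha⟩⟩
  obtain ⟨⟨d, hdc⟩, hd⟩ := Finite.exists_max (fun a : {a // T.peck a c} => mu T a.1)
  have hmax : ∀ z, T.peck z c → mu T z ≤ mu T d := fun z hz => hd ⟨z, hz⟩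
  by_cases hduke : T.isDuke 3 d
  · exact Or.inl ⟨d, hduke, hdc⟩
  have hduke' : ¬ ∀ x, T.part x ≠ T.part d → T.hasPath 3 d x := hduke
  push_neg at hduke'
  obtain ⟨v, hvd, hv3⟩ := hduke'
  -- negative facts: no short path from d to v
  have nP0 : ¬ T.peck d v := fun h => hv3 (path1 T (by norm_num) h)
  have nP1 : ∀ y, T.peck d y → ¬ T.peck y v :=
    fun y h1 h2 => hv3 (path2 T (by norm_num) h1 h2)
  have nP2 : ∀ y u, T.peck d y → T.peck y u → ¬ T.peck u v :=
    fun y u h1 h2 h3 => hv3 (path3 T (by norm_num) h1 h2 h3)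
  -- v pecks everything reachable from d in ≤ 2 steps that is not in v's part
  have hR2v : ∀ y, (y = d ∨ T.peck d y ∨ ∃ w, T.peck d w ∧ T.peck w y) →
      T.part y ≠ T.part v → T.peck v y := by
    intro y hy hyv
    have hnyv : ¬ T.peck y v := by
      rcases hy with rfl | hy | ⟨w, hw1, hw2⟩
      · exact nP0
      · exact nP1 y hy
      · exact nP2 w y hw1 hw2
    rcases T.complete v y hyv.symm with h | h
    · exact h
    · exact absurd h hnyv
  -- v pecks d
  have hvpd : T.peck v d := by
    rcases T.complete v d hvd with h | h
    · exact h
    · exact absurd h nP0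
  -- v pecks every member of d's part
  have hvPd : ∀ p, T.part p = T.part d → T.peck v p := by
    intro p hp
    have hpv : T.part p ≠ T.part v := by rw [hp]; exact hvd.symm
    by_cases hpd : p = d
    · exact hpd ▸ hvpd
    by_cases h2s : ∃ w, T.peck d w ∧ T.peck w p
    · exact hR2v p (Or.inr (Or.inr h2s)) hpv
    · -- p is outside reach-2 of d, so p pecks everything d pecks
      have hpN : ∀ w, T.peck d w → T.peck p w := by
        intro w hw
        have hwp : ¬ T.peck w p := fun h => h2s ⟨w, hw, h⟩
        have : T.part p ≠ T.part w := by rw [hp]; exact T.inter d w hw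
        rcases T.complete p w this with h | h
        · exact h
        · exact absurd h hwp
      have hnpv : ¬ T.peck p v := fun h => kblock T hdc hmax hp hpN nP0 hvd h
      rcases T.complete v p hpv.symm with h | h
      · exact h
      · exact absurd h hnpv
  -- h1 for any bad-style vertex z that pecks R2 off its part is built inline
  -- First: v's part equals c's part
  have hvc : T.part v = T.part c := by
    by_contra hvc
    have hzc : T.peck v c := hR2v c (Or.inr (Or.inl hdc)) (fun h => hvc h.symm)
    refine core T hmax hzc ?_ ?_ (Or.inr rfl) nP0 hvd
    · intro w hw
      by_cases hwv : T.part w = T.part v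
      · exact Or.inr hwv
      · exact Or.inl (hR2v w (Or.inr (Or.inl hw)) hwv)
    · intro p hp
      exact Or.inl (hvPd p hp)
  refine Or.inr ⟨v, hvc, ?_⟩
  -- v is a 2-duke
  intro x hxv
  by_contra hx2
  have nQ0 : ¬ T.peck v x := fun h => hx2 (path1 T (by norm_num) h)
  have nQ1 : ∀ w, T.peck v w → ¬ T.peck w x :=
    fun w h1 h2 => hx2 (path2 T (by norm_num) h1 h2)
  -- x is not reachable from d within 2
  have hxR2 : ¬ (x = d ∨ T.peck d x ∨ ∃ w, T.peck d w ∧ T.peck w x) :=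
    fun hy => nQ0 (hR2v x hy hxv)
  have hndx : ¬ T.peck d x := fun h => hxR2 (Or.inr (Or.inl h))
  -- x pecks c
  have hxc : T.peck x c := by
    have hxpc : T.part x ≠ T.part c := hvc ▸ hxv
    have hncx : ¬ T.peck c x := fun h => hxR2 (Or.inr (Or.inr ⟨c, hdc, h⟩))
    rcases T.complete x c hxpc with h | h
    · exact h
    · exact absurd h hncx
  -- x is not in d's part
  have hxd : T.part x ≠ T.part d := by
    intro hxd
    have hxN : ∀ w, T.peck d w → T.peck x w := by
      intro w hw
      have hwx : ¬ T.peck w x := fun h => hxR2 (Or.inr (Or.inr ⟨w, hw, h⟩))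
      have : T.part x ≠ T.part w := by rw [hxd]; exact T.inter d w hw
      rcases T.complete x w this with h | h
      · exact h
      · exact absurd h hwx
    have hxvp : T.peck x v := by
      have : T.part x ≠ T.part v := hxv
      rcases T.complete x v this with h | h
      · exact h
      · exact absurd h nQ0
    exact kblock T hdc hmax hxd hxN nP0 hvd hxvp
  -- x pecks v
  have hxpv : T.peck x v := by
    rcases T.complete x v hxv with h | h
    · exact h
    · exact absurd h nQ0
  -- final application of core with z := x, wit := v
  refine core T hmax hxc ?_ ?_ (Or.inl hxpv) nP0 hvd
  · intro w hw
    by_cases hwx : T.part w = T.part x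
    · exact Or.inr hwx
    · have hwpx : ¬ T.peck w x := fun h => hxR2 (Or.inr (Or.inr ⟨w, hw, h⟩))
      rcases T.complete x w (fun h => hwx h.symm) with h | h
      · exact Or.inl h
      · exact absurd h hwpx
  · intro p hp
    have hppx : T.part p ≠ T.part x := by rw [hp]; exact fun h => hxd h.symm
    by_cases hpd : p = d
    · subst hpd
      rcases T.complete x p hppx.symm with h | h
      · exact Or.inl h
      · exact absurd h hndx
    by_cases h2s : ∃ w, T.peck d w ∧ T.peck w p
    · have hvp : T.peck v p := hvPd p hp
      have hnpx : ¬ T.peck p x := nQ1 p hvp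
      rcases T.complete x p hppx.symm with h | h
      · exact Or.inl h
      · exact absurd h hnpx
    · have hpN : ∀ w, T.peck d w → T.peck p w := by
        intro w hw
        have hwp : ¬ T.peck w p := fun h => h2s ⟨w, hw, h⟩
        have : T.part p ≠ T.part w := by rw [hp]; exact T.inter d w hw
        rcases T.complete p w this with h | h
        · exact h
        · exact absurd h hwp
      have hnpx : ¬ T.peck p x := fun h => kblock T hdc hmax hp hpN hndx hxd h
      rcases T.complete x p hppx.symm with h | h
      · exact Or.inl h
      · exact absurd h hnpx
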